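/- A sequence s : ℕ → ℝ satisfies the dissipativity condition — for every k₀ ∈ ℕ there exists C ∈ ℝ such that −∑_{k=k₀}^{k₁} s(k) ≤ C for all k₁ ≥ k₀ — if and only if there exists a storage function V : ℕ → ℝ with V(k) ≥ 0 for all k ∈ ℕ and V(k) − V(k−1) ≤ s(k) for all k ≥ 1. -/
import Mathlib


/-- a supply rate `s : ℕ → ℝ` is dissipative (for every `k₀` the
extracted supply `−∑_{k=k₀}^{k₁} s(k)` is bounded above uniformly in `k₁ ≥ k₀`)
iff there exists a nonnegative storage function `V` with
`V(k) − V(k−1) ≤ s(k)` for all `k ≥ 1`. -/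
theorem dissipative_iff_storage (s : ℕ → ℝ) :
    (∀ k₀ : ℕ, ∃ C : ℝ, ∀ k₁ : ℕ, k₀ ≤ k₁ → -(∑ k ∈ Finset.Icc k₀ k₁, s k) ≤ C) ↔
      ∃ V : ℕ → ℝ, (∀ k, 0 ≤ V k) ∧ ∀ k, 1 ≤ k → V k - V (k - 1) ≤ s k := by
  constructor
  · intro h
    set V : ℕ → ℝ := fun k => sSup (Set.range fun k₁ => -(∑ j ∈ Finset.Icc (k+1) k₁, s j))
      with hVdef
    have hbdd : ∀ k, BddAbove (Set.range fun k₁ => -(∑ j ∈ Finset.Icc (k+1) k₁, s j)) := by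
      intro k
      obtain ⟨C, hC⟩ := h (k+1)
      refine ⟨max C 0, ?_⟩
      rintro x ⟨k₁, rfl⟩
      by_cases hk : k + 1 ≤ k₁
      · exact le_max_of_le_left (hC k₁ hk)
      · simp only [Finset.Icc_eq_empty (by omega : ¬ k + 1 ≤ k₁), Finset.sum_empty, neg_zero,
          le_max_iff, le_refl, or_true]
    have hmem : ∀ k k₁, -(∑ j ∈ Finset.Icc (k+1) k₁, s j) ≤ V k := fun k k₁ =>
      le_csSup (hbdd k) ⟨k₁, rfl⟩
    refine ⟨V, ?_, ?_⟩
    · intro k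
      have := hmem k k
      rwa [Finset.Icc_eq_empty (by omega : ¬ k + 1 ≤ k), Finset.sum_empty, neg_zero] at this
    · intro k hk
      have hk1 : k - 1 + 1 = k := by omega
      rw [sub_le_iff_le_add]
      apply csSup_le (Set.range_nonempty _)
      rintro x ⟨k₁, rfl⟩
      beta_reduce
      by_cases hkk : k ≤ k₁
      · have hins : Finset.Icc k k₁ = insert k (Finset.Icc (k+1) k₁) := by
          rw [Finset.Icc_add_one_left_eq_Ioc, Finset.Ioc_insert_left hkk]
        have hnot : k ∉ Finset.Icc (k+1) k₁ := by simp
        have hsplit : ∑ j ∈ Finset.Icc k k₁, s j = s k + ∑ j ∈ Finset.Icc (k+1) k₁, s j := by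
          rw [hins, Finset.sum_insert hnot]
        have h2 := hmem (k-1) k₁
        rw [hk1] at h2
        linarith [hsplit ▸ h2]
      · have h2 := hmem (k-1) k
        rw [hk1, Finset.Icc_self, Finset.sum_singleton] at h2
        simp only [Finset.Icc_eq_empty (by omega : ¬ k + 1 ≤ k₁), Finset.sum_empty, neg_zero]
        linarith
  · rintro ⟨V, hV0, hVs⟩
    have key : ∀ a b : ℕ, a ≤ b → V b - V a ≤ ∑ j ∈ Finset.Icc (a+1) b, s j := by
      intro a b hab
      induction b, hab using Nat.le_induction with
      | base => simp
      | succ b hb ih =>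
        rw [Finset.sum_Icc_succ_top (by omega : a + 1 ≤ b + 1)]
        have := hVs (b+1) (by omega)
        simp only [Nat.add_sub_cancel] at this
        linarith
    intro k₀
    rcases Nat.eq_zero_or_pos k₀ with h0 | h0
    · subst h0
      refine ⟨V 0 - s 0, fun k₁ _ => ?_⟩
      rcases Nat.eq_zero_or_pos k₁ with h1 | h1
      · subst h1
        simp only [Finset.Icc_self, Finset.sum_singleton]
        linarith [hV0 0]
      · have hins : Finset.Icc 0 k₁ = insert 0 (Finset.Icc 1 k₁) := by
          rw [show (1:ℕ) = 0 + 1 from rfl, Finset.Icc_add_one_left_eq_Ioc,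
            Finset.Ioc_insert_left (Nat.zero_le _)]
        have hnot : 0 ∉ Finset.Icc 1 k₁ := by simp
        rw [hins, Finset.sum_insert hnot]
        have := key 0 k₁ (Nat.zero_le _)
        have hk1 := hV0 k₁
        linarith
    · refine ⟨V (k₀ - 1), fun k₁ hk₁ => ?_⟩
      have := key (k₀ - 1) k₁ (by omega)
      rw [show k₀ - 1 + 1 = k₀ by omega] at this
      linarith [hV0 k₁]
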